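/- Every ω-chain 𝓔₁ ⊴ 𝓔₂ ⊴ … of event structures has a least upper bound with respect to ⊴, given by the componentwise union ⟨⋃ᵢ Eᵢ, ⋃ᵢ #ᵢ, ⋃ᵢ ⊢ᵢ, ⋃ᵢ ℓᵢ⟩, and this componentwise union is itself an event structure (conflict irreflexive and symmetric, enabling saturated). -/

import Mathlib

namespace ESC

/-- Labelled event structure data: events, conflict, enabling, labelling (relational). -/
structure LES (Ev Act : Type) where
  events : Set Ev
  conf : Ev → Ev → Prop
  enab : Set Ev → Ev → Prop
  lab : Ev → Act → Prop

/-- Conflict-freeness of a set of events. -/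
def CF {Ev : Type} (C : Ev → Ev → Prop) (X : Set Ev) : Prop :=
  ∀ e ∈ X, ∀ e' ∈ X, ¬ C e e'

/-- Well-formedness: irreflexive symmetric conflict, saturated enabling over
finite conflict-free subsets, labelling a (partial) function on events. -/
structure IsES {Ev Act : Type} (E : LES Ev Act) : Prop where
  conf_mem : ∀ e e', E.conf e e' → e ∈ E.events ∧ e' ∈ E.events
  conf_irrefl : ∀ e, ¬ E.conf e e
  conf_symm : ∀ e e', E.conf e e' → E.conf e' e
  enab_dom : ∀ X e, E.enab X e → X ⊆ E.events ∧ e ∈ E.events ∧ X.Finite ∧ CF E.conf X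
  saturated : ∀ X Y e, E.enab X e → X ⊆ Y → Y ⊆ E.events → Y.Finite → CF E.conf Y → E.enab Y e
  lab_dom : ∀ e a, E.lab e a → e ∈ E.events
  lab_fun : ∀ e a b, E.lab e a → E.lab e b → a = b
  lab_total : ∀ e ∈ E.events, ∃ a, E.lab e a

/-- The order ⊴ on event structures. -/
def leES {Ev Act : Type} (E E' : LES Ev Act) : Prop :=
  E.events ⊆ E'.events ∧
  (∀ e e', E.conf e e' → E'.conf e e') ∧
  (∀ X e, E.enab X e → E'.enab X e) ∧
  (∀ e ∈ E.events, ∀ a, E.lab e a ↔ E'.lab e a) ∧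
  (∀ e e', e ∈ E.events → e' ∈ E.events → E'.conf e e' → E.conf e e') ∧
  (∀ X e, X ⊆ E.events → e ∈ E.events → E'.enab X e → E.enab X e)

/-- The empty event structure. -/
def emptyES {Ev Act : Type} : LES Ev Act :=
  ⟨∅, fun _ _ => False, fun _ _ => False, fun _ _ => False⟩

/-- Componentwise union of a countable family of event structures. -/
def unionES {Ev Act : Type} (c : ℕ → LES Ev Act) : LES Ev Act :=
  ⟨⋃ n, (c n).events,
   fun e e' => ∃ n, (c n).conf e e',
   fun X e => ∃ n, (c n).enab X e,
   fun e a => ∃ n, (c n).lab e a⟩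

/-- Least fixed point (Kleene iteration from the empty ES). -/
def fixES {Ev Act : Type} (F : LES Ev Act → LES Ev Act) : LES Ev Act :=
  unionES (fun n => F^[n] emptyES)

/-- Events surviving after executing `e`. -/
def remEvents {Ev Act : Type} (E : LES Ev Act) (e : Ev) : Set Ev :=
  E.events \ ({e} ∪ {e' | E.conf e e'})

/-- Remainder `E[e]` of an event structure after executing `e`. -/
def remainder {Ev Act : Type} (E : LES Ev Act) (e : Ev) : LES Ev Act where
  events := remEvents E e
  conf := fun e1 e2 => E.conf e1 e2 ∧ e1 ∈ remEvents E e ∧ e2 ∈ remEvents E e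
  enab := fun X e' => ∃ Y, E.enab Y e' ∧ e' ≠ e ∧ ¬ E.conf e' e ∧ CF E.conf (Y ∪ {e}) ∧ X = Y \ {e}
  lab := fun e' a => E.lab e' a ∧ e' ∈ remEvents E e

/-- Finite plays (as lists), via iterated remainders. -/
def isPlayL {Ev Act : Type} : LES Ev Act → List Ev → Prop
  | _, [] => True
  | E, e :: σ => E.enab ∅ e ∧ isPlayL (remainder E e) σ

/-- The set of events occurring among the first `i` positions of `σ`. -/
def prefixSet {Ev : Type} (σ : ℕ → Option Ev) (i : ℕ) : Set Ev :=
  {e | ∃ j, j < i ∧ σ j = some e}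

/-- The list of the first `i` events of `σ`. -/
def prefixList {Ev : Type} (σ : ℕ → Option Ev) : ℕ → List Ev
  | 0 => []
  | i + 1 => prefixList σ i ++ (σ i).toList

/-- The remainder of `E` after the first `i` events of `σ`. -/
def remAfter {Ev Act : Type} (E : LES Ev Act) (σ : ℕ → Option Ev) : ℕ → LES Ev Act
  | 0 => E
  | i + 1 =>
    match σ i with
    | none => remAfter E σ i
    | some e => remainder (remAfter E σ i) e

/-- Plays, possibly infinite: `σ i = none` means the play has ended before `i`. -/
def IsPlay {Ev Act : Type} (E : LES Ev Act) (σ : ℕ → Option Ev) : Prop :=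
  (∀ i j, i ≤ j → σ i = none → σ j = none) ∧
  (∀ i e, σ i = some e → (remAfter E σ i).enab ∅ e)

/-- Innocence of participant `A` in the play `σ`. -/
def Innocent {Ev Act Ppt : Type} (π : Ev → Ppt) (E : LES Ev Act) (A : Ppt)
    (σ : ℕ → Option Ev) : Prop :=
  ∀ i e, π e = A → E.enab (prefixSet σ i) e →
    ∃ j, i ≤ j ∧ ∃ e', σ j = some e' ∧ (E.conf e' e ∨ e' = e)

/-- Strategies for `A`: map finite plays to sets of `A`'s events extending the play. -/
def IsStrategy {Ev Act Ppt : Type} (π : Ev → Ppt) (E : LES Ev Act) (A : Ppt)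
    (S : List Ev → Set Ev) : Prop :=
  ∀ σ, isPlayL E σ → ∀ e ∈ S σ, π e = A ∧ isPlayL E (σ ++ [e])

/-- `σ` conforms to strategy `S` for participant `A`. -/
def Conforms {Ev Ppt : Type} (π : Ev → Ppt) (A : Ppt) (S : List Ev → Set Ev)
    (σ : ℕ → Option Ev) : Prop :=
  ∀ i e, σ i = some e → π e = A → e ∈ S (prefixList σ i)

/-- Position `j` is within the play `σ`. -/
def validPos {Ev : Type} (σ : ℕ → Option Ev) (j : ℕ) : Prop :=
  ∀ k, k < j → σ k ≠ none

/-- Fairness of `σ` w.r.t. strategy `S`: permanently prescribed events happen. -/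
def FairW {Ev : Type} (S : List Ev → Set Ev) (σ : ℕ → Option Ev) : Prop :=
  ∀ i e, validPos σ i →
    (∀ j, i ≤ j → validPos σ j → e ∈ S (prefixList σ j)) →
    ∃ h, i ≤ h ∧ σ h = some e

/-- A contract: a labelled ES plus a partial payoff assignment. -/
structure Contract (Ev Act Ppt : Type) where
  es : LES Ev Act
  payoff : Ppt → Option (Set (ℕ → Option Ev))

/-- Winning plays of `A`. -/
def Wins {Ev Act Ppt : Type} (π : Ev → Ppt) (C : Contract Ev Act Ppt) (A : Ppt)
    (σ : ℕ → Option Ev) : Prop :=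
  (∃ S, C.payoff A = some S ∧ σ ∈ S ∧ ∀ B : Ppt, Innocent π C.es B σ) ∨
  (Innocent π C.es A σ ∧ ∃ B : Ppt, B ≠ A ∧ ¬ Innocent π C.es B σ)

/-- `S` is a winning strategy for `A` in `C`. -/
def WinningFor {Ev Act Ppt : Type} (π : Ev → Ppt) (C : Contract Ev Act Ppt) (A : Ppt)
    (S : List Ev → Set Ev) : Prop :=
  IsStrategy π C.es A S ∧
  ∀ σ, IsPlay C.es σ → Conforms π A S σ → FairW S σ → Wins π C A σ

/-- The eager strategy of `A`: do all currently enabled events of `A`. -/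
def eager {Ev Act Ppt : Type} (π : Ev → Ppt) (E : LES Ev Act) (A : Ppt)
    (σ : List Ev) : Set Ev :=
  {e | π e = A ∧ E.enab {x | x ∈ σ} e}

/-- Composability of contracts: payoff domains are disjoint. -/
def Composable {Ev Act Ppt : Type} (C C' : Contract Ev Act Ppt) : Prop :=
  ∀ A : Ppt, C.payoff A = none ∨ C'.payoff A = none

/-- Plain (componentwise-union) composition of contracts. -/
def ccompU {Ev Act Ppt : Type} (C C' : Contract Ev Act Ppt) : Contract Ev Act Ppt :=
  ⟨⟨C.es.events ∪ C'.es.events,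
    fun e e' => C.es.conf e e' ∨ C'.es.conf e e',
    fun X e => C.es.enab X e ∨ C'.es.enab X e,
    fun e a => C.es.lab e a ∨ C'.es.lab e a⟩,
   fun A => (C.payoff A).orElse (fun _ => C'.payoff A)⟩

/-! ### Binary session types -/

/-- Session types (binary choices encode finite non-empty choices), extended with
committed branches `comm`, one-position buffers `buf`, and the stuck state `zero`. -/
inductive Proc (Act : Type) where
  | success : Proc Act
  | send : Act → Proc Act → Proc Act      -- ā.P as an internal branch
  | recv : Act → Proc Act → Proc Act      -- a.P as an external branch
  | ichoice : Proc Act → Proc Act → Proc Act  -- ⊕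
  | echoice : Proc Act → Proc Act → Proc Act  -- +
  | var : ℕ → Proc Act                    -- de Bruijn variable
  | recur : Proc Act → Proc Act             -- rec x.P
  | comm : Act → Proc Act → Proc Act      -- committed internal branch ā.P
  | buf : Act → Proc Act → Proc Act       -- [ā]P
  | zero : Proc Act                       -- 0

/-- Branches of an internal choice. -/
inductive IBr {Act : Type} : Proc Act → Act → Proc Act → Prop where
  | send {a P} : IBr (Proc.send a P) a P
  | il {P Q a R} : IBr P a R → IBr (Proc.ichoice P Q) a R
  | ir {P Q a R} : IBr Q a R → IBr (Proc.ichoice P Q) a R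

/-- Branches of an external choice. -/
inductive EBr {Act : Type} : Proc Act → Act → Proc Act → Prop where
  | recv {a P} : EBr (Proc.recv a P) a P
  | el {P Q a R} : EBr P a R → EBr (Proc.echoice P Q) a R
  | er {P Q a R} : EBr Q a R → EBr (Proc.echoice P Q) a R

/-- Substitution of `Q` for de Bruijn variable `k`. -/
def subst {Act : Type} (Q : Proc Act) : ℕ → Proc Act → Proc Act
  | _, .success => .success
  | k, .send a P => .send a (subst Q k P)
  | k, .recv a P => .recv a (subst Q k P)
  | k, .ichoice P1 P2 => .ichoice (subst Q k P1) (subst Q k P2)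
  | k, .echoice P1 P2 => .echoice (subst Q k P1) (subst Q k P2)
  | k, .var m => if m = k then Q else .var m
  | k, .recur P => .recur (subst Q (k+1) P)
  | k, .comm a P => .comm a (subst Q k P)
  | k, .buf a P => .buf a (subst Q k P)
  | _, .zero => .zero

/-- Standard (reduction) semantics of compositions `P ∥ Q`. -/
inductive Step {Act : Type} : Proc Act × Proc Act → Proc Act × Proc Act → Prop where
  | commitL {P P' Q : Proc Act} {a : Act} : IBr P a P' → Step (P, Q) (Proc.comm a P', Q)
  | commitR {P Q Q' : Proc Act} {a : Act} : IBr Q a Q' → Step (P, Q) (P, Proc.comm a Q')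
  | unfoldL {P Q : Proc Act} : Step (Proc.recur P, Q) (subst (Proc.recur P) 0 P, Q)
  | unfoldR {P Q : Proc Act} : Step (P, Proc.recur Q) (P, subst (Proc.recur Q) 0 Q)
  | syncL {P Q Q' : Proc Act} {a : Act} : EBr Q a Q' → Step (Proc.comm a P, Q) (P, Q')
  | syncR {P P' Q : Proc Act} {a : Act} : EBr P a P' → Step (P, Proc.comm a Q) (P', Q)

/-- A stuck configuration. -/
def Stuck {Act : Type} (c : Proc Act × Proc Act) : Prop := ∀ c', ¬ Step c c'

/-- Compliance: every reachable stuck configuration has the client succeeded. -/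
def Compliant {Act : Type} (P Q : Proc Act) : Prop :=
  ∀ c, Relation.ReflTransGen Step (P, Q) c → Stuck c → c.1 = Proc.success

/-- Well-formed session types: `WF n U P` means free variables are `< n` and
variables satisfying `¬ U` may only occur guarded (under a prefix). -/
inductive WF {Act : Type} : ℕ → (ℕ → Prop) → Proc Act → Prop where
  | success {n U} : WF n U (Proc.success : Proc Act)
  | send {n U} {a : Act} {P} : WF n (fun _ => True) P → WF n U (Proc.send a P)
  | recv {n U} {a : Act} {P} : WF n (fun _ => True) P → WF n U (Proc.recv a P)
  | ichoice {n U} {P Q : Proc Act} : WF n U P → WF n U Q → WF n U (Proc.ichoice P Q)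
  | echoice {n U} {P Q : Proc Act} : WF n U P → WF n U Q → WF n U (Proc.echoice P Q)
  | var {n U m} : m < n → U m → WF n U (Proc.var m : Proc Act)
  | recur {n U} {P : Proc Act} : WF (n+1) (fun k => ∃ j, k = j + 1 ∧ U j) P → WF n U (Proc.recur P)

/-- Closed, guarded session types. -/
def WF0 {Act : Type} (P : Proc Act) : Prop := WF 0 (fun _ => False) P

/-- Labels of the event structures and of the turn-based semantics:
inputs `a`, outputs `ā`, and the success label ✓. -/
inductive Lbl (Act : Type) where
  | inp : Act → Lbl Act
  | out : Act → Lbl Act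
  | tick : Lbl Act

/-- Turn-based labelled semantics with one-position buffers (recursion unfolded tacitly). -/
inductive TStep {Act : Type} : Proc Act × Proc Act → Lbl Act → Proc Act × Proc Act → Prop where
  | outL {P P' R : Proc Act} {a : Act} : IBr P a P' → TStep (P, R) (Lbl.out a) (Proc.buf a P', R)
  | outR {P R R' : Proc Act} {a : Act} : IBr R a R' → TStep (P, R) (Lbl.out a) (P, Proc.buf a R')
  | inL {P P' R : Proc Act} {a : Act} : EBr P a P' → TStep (P, Proc.buf a R) (Lbl.inp a) (P', R)
  | inR {P R R' : Proc Act} {a : Act} : EBr R a R' → TStep (Proc.buf a P, R) (Lbl.inp a) (P, R')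
  | tickL {P : Proc Act} : TStep (Proc.success, P) Lbl.tick (Proc.zero, P)
  | tickR {P : Proc Act} : TStep (P, Proc.success) Lbl.tick (P, Proc.zero)
  | unfL {P Q c l} : TStep (subst (Proc.recur P) 0 P, Q) l c → TStep (Proc.recur P, Q) l c
  | unfR {P Q c l} : TStep (P, subst (Proc.recur Q) 0 Q) l c → TStep (P, Proc.recur Q) l c

/-! ### ES denotation of session types -/

/-- Canonical event renaming used for freshness: prepend `n` to the path. -/
def shiftE {Ppt : Type} (n : ℕ) : Ppt × List ℕ → Ppt × List ℕ := fun e => (e.1, n :: e.2)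

/-- Rename all events of `E` by `shiftE n`. -/
def shiftES {Ppt Act : Type} (n : ℕ) (E : LES (Ppt × List ℕ) Act) : LES (Ppt × List ℕ) Act :=
  ⟨shiftE n '' E.events,
   fun e e' => ∃ d d', e = shiftE n d ∧ e' = shiftE n d' ∧ E.conf d d',
   fun X e => ∃ Y d, X = shiftE n '' Y ∧ e = shiftE n d ∧ E.enab Y d,
   fun e a => ∃ d, e = shiftE n d ∧ E.lab d a⟩

/-- Prefixing with a fresh event `ea` labelled `α`. -/
def prefixES {Ev Act : Type} (ea : Ev) (α : Act) (E : LES Ev Act) : LES Ev Act :=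
  ⟨insert ea E.events, E.conf,
   fun X e => (X = ∅ ∧ e = ea) ∨ ∃ Y, E.enab Y e ∧ X = insert ea Y,
   fun e a => (e = ea ∧ a = α) ∨ E.lab e a⟩

/-- Choice: disjoint union with initial events of different branches in conflict. -/
def choiceES {Ev Act : Type} (E1 E2 : LES Ev Act) : LES Ev Act :=
  ⟨E1.events ∪ E2.events,
   fun e e' => E1.conf e e' ∨ E2.conf e e' ∨
     (E1.enab ∅ e ∧ E2.enab ∅ e') ∨ (E2.enab ∅ e ∧ E1.enab ∅ e'),
   fun X e => E1.enab X e ∨ E2.enab X e,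
   fun e a => E1.lab e a ∨ E2.lab e a⟩

/-- Denotation of ✓: a single ✓-labelled enabled event of `A`. -/
def successES {Ppt Act : Type} (A : Ppt) : LES (Ppt × List ℕ) (Lbl Act) :=
  ⟨{(A, ([] : List ℕ))}, fun _ _ => False,
   fun X e => X = ∅ ∧ e = (A, []),
   fun e l => e = (A, []) ∧ l = Lbl.tick⟩

/-- Extend an environment with a new denotation for variable 0. -/
def consEnv {Ev Act : Type} (E : LES Ev Act) (ρ : ℕ → LES Ev Act) : ℕ → LES Ev Act
  | 0 => E
  | k + 1 => ρ k

/-- ES denotation `⟦P⟧_A ρ` of a session type, all events owned by `A`. -/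
def semST {Act Ppt : Type} (A : Ppt) :
    (ℕ → LES (Ppt × List ℕ) (Lbl Act)) → Proc Act → LES (Ppt × List ℕ) (Lbl Act)
  | _, .success => successES A
  | ρ, .send a P => prefixES (A, []) (Lbl.out a) (shiftES 0 (semST A ρ P))
  | ρ, .recv a P => prefixES (A, []) (Lbl.inp a) (shiftES 0 (semST A ρ P))
  | ρ, .ichoice P Q => choiceES (shiftES 0 (semST A ρ P)) (shiftES 1 (semST A ρ Q))
  | ρ, .echoice P Q => choiceES (shiftES 0 (semST A ρ P)) (shiftES 1 (semST A ρ Q))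
  | ρ, .var m => ρ m
  | ρ, .recur P => fixES (fun E => semST A (consEnv E ρ) P)
  | _, .comm _ _ => emptyES
  | _, .buf _ _ => emptyES
  | _, .zero => emptyES

/-- The complementary label. -/
def coLbl {Act : Type} : Lbl Act → Lbl Act
  | .inp a => .out a
  | .out a => .inp a
  | .tick => .tick

/-- Co-actions (outputs and ✓). -/
def isCo {Act : Type} : Lbl Act → Prop
  | .inp _ => False
  | _ => True

/-- `e'` (in `Ei`) is matched by the synchronizing event `e''` (in `Ej`). -/
def LabMatch {Ev Act : Type} (Ei Ej : LES Ev (Lbl Act)) (e' e'' : Ev) : Prop :=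
  ∃ l, Ei.lab e' l ∧ Ej.lab e'' (coLbl l)

/-- Composed enabling for a co-action event of side `i`. -/
def parEnabCo {Ev Act : Type} (Ei Ej : LES Ev (Lbl Act)) (Z : Set Ev) (e : Ev) : Prop :=
  ∃ X Y, Ei.enab X e ∧ (∃ l, Ei.lab e l ∧ isCo l) ∧ Y ⊆ Ej.events ∧
    (∀ e' ∈ X, ∃ e'' ∈ Y, LabMatch Ei Ej e' e'') ∧ Z = X ∪ Y

/-- Composed enabling for an input event of side `i` (needs its own co-event `eh`). -/
def parEnabIn {Ev Act : Type} (Ei Ej : LES Ev (Lbl Act)) (Z : Set Ev) (e : Ev) : Prop :=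
  ∃ X Y eh a, Ei.enab X e ∧ Ei.lab e (Lbl.inp a) ∧ Y ⊆ Ej.events ∧
    eh ∈ Ej.events ∧ Ej.lab eh (Lbl.out a) ∧
    (∀ e' ∈ X, ∃ e'' ∈ Y, LabMatch Ei Ej e' e'') ∧ Z = X ∪ Y ∪ {eh}

/-- ES denotation of a composition `P₁ ∥ P₂`, given the two sides. -/
def parES {Ev Act : Type} (E1 E2 : LES Ev (Lbl Act)) : LES Ev (Lbl Act) :=
  ⟨E1.events ∪ E2.events,
   fun e e' => E1.conf e e' ∨ E2.conf e e',
   fun Z e => parEnabCo E1 E2 Z e ∨ parEnabCo E2 E1 Z e ∨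
              parEnabIn E1 E2 Z e ∨ parEnabIn E2 E1 Z e,
   fun e l => E1.lab e l ∨ E2.lab e l⟩

/-- Transitions of the LTS `ETS(E)`: fire an `∅`-enabled event, pass to the remainder. -/
def ETStep {Ev Act : Type} (E : LES Ev Act) (l : Act) (E' : LES Ev Act) : Prop :=
  ∃ e, E.enab ∅ e ∧ E.lab e l ∧ E' = remainder E e

/-- Payoff of `A`: finite plays must contain a ✓-labelled event of `A`. -/
def payoffOf {Act Ppt : Type} (A : Ppt) (E : LES (Ppt × List ℕ) (Lbl Act)) :
    Set (ℕ → Option (Ppt × List ℕ)) :=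
  {σ | (∃ i, σ i = none) → ∃ j e, σ j = some e ∧ e.1 = A ∧ E.lab e Lbl.tick}

/-- The contract `𝓒_A(P)` of a session type. -/
noncomputable def contractOf {Act Ppt : Type} [DecidableEq Ppt] (A : Ppt) (P : Proc Act) :
    Contract (Ppt × List ℕ) (Lbl Act) Ppt :=
  ⟨semST A (fun _ => emptyES) P,
   fun X => if X = A then some (payoffOf A (semST A (fun _ => emptyES) P)) else none⟩

/-- Composition of (session-type) contracts: the game is played on the composed ES. -/
noncomputable def ccomp {Ev Act Ppt : Type} (C C' : Contract Ev (Lbl Act) Ppt) :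
    Contract Ev (Lbl Act) Ppt :=
  ⟨parES C.es C'.es, fun X => (C.payoff X).orElse (fun _ => C'.payoff X)⟩

/-- Recursion-free (and variable-free) session types. -/
inductive NoRec {Act : Type} : Proc Act → Prop where
  | success : NoRec (Proc.success : Proc Act)
  | send {a : Act} {P} : NoRec P → NoRec (Proc.send a P)
  | recv {a : Act} {P} : NoRec P → NoRec (Proc.recv a P)
  | ichoice {P Q : Proc Act} : NoRec P → NoRec Q → NoRec (Proc.ichoice P Q)
  | echoice {P Q : Proc Act} : NoRec P → NoRec Q → NoRec (Proc.echoice P Q)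

end ESC

namespace ESC

lemma leES_trans {Ev Act : Type} {E1 E2 E3 : LES Ev Act}
    (h12 : leES E1 E2) (h23 : leES E2 E3) : leES E1 E3 := by
  obtain ⟨a1, b1, c1, d1, e1, f1⟩ := h12
  obtain ⟨a2, b2, c2, d2, e2, f2⟩ := h23
  refine ⟨a1.trans a2, fun e e' h => b2 _ _ (b1 _ _ h), fun X e h => c2 _ _ (c1 _ _ h),
    fun e he a => (d1 e he a).trans (d2 e (a1 he) a),
    fun e e' he he' h => e1 e e' he he' (e2 e e' (a1 he) (a1 he') h),
    fun X e hX he h => f1 X e hX he (f2 X e (hX.trans a1) (a1 he) h)⟩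

lemma leES_mono {Ev Act : Type} {c : ℕ → LES Ev Act}
    (hchain : ∀ n, leES (c n) (c (n + 1))) :
    ∀ m n, m ≤ n → leES (c m) (c n) := by
  intro m n hmn
  induction n, hmn using Nat.le_induction with
  | base =>
    exact ⟨subset_rfl, fun _ _ h => h, fun _ _ h => h, fun _ _ _ => Iff.rfl,
      fun _ _ _ _ h => h, fun _ _ _ _ h => h⟩
  | succ n hmn ih => exact leES_trans ih (hchain n)

lemma finite_subset_union {Ev Act : Type} {c : ℕ → LES Ev Act}
    (hchain : ∀ n, leES (c n) (c (n + 1))) {X : Set Ev} (hfin : X.Finite)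
    (hsub : X ⊆ ⋃ n, (c n).events) : ∃ N, X ⊆ (c N).events := by
  refine Set.Finite.induction_on
    (motive := fun X _ => X ⊆ (⋃ n, (c n).events) → ∃ N, X ⊆ (c N).events) X hfin
    (fun _ => ⟨0, by simp⟩) ?_ hsub
  intro x X _ _ ih hsub'
  obtain ⟨N, hN⟩ := ih (fun y hy => hsub' (Set.mem_insert_of_mem _ hy))
  obtain ⟨s, ⟨n, rfl⟩, hxn⟩ := hsub' (Set.mem_insert _ _)
  exact ⟨max n N, Set.insert_subset ((leES_mono hchain n _ (le_max_left n N)).1 hxn)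
    (hN.trans (leES_mono hchain N _ (le_max_right n N)).1)⟩

/-- Every ω-chain of event structures has the componentwise union as least
upper bound w.r.t. ⊴, and this union is itself an event structure. -/
theorem unionES_lub {Ev Act : Type} (c : ℕ → LES Ev Act)
    (hES : ∀ n, IsES (c n)) (hchain : ∀ n, leES (c n) (c (n + 1))) :
    IsES (unionES c) ∧
    (∀ n, leES (c n) (unionES c)) ∧
    (∀ U : LES Ev Act, IsES U → (∀ n, leES (c n) U) → leES (unionES c) U) := by
  have mono := leES_mono hchain
  -- conflicts between events of c n present in some c m are already in c n
  have confdown : ∀ n e e', e ∈ (c n).events → e' ∈ (c n).events →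
      (∃ m, (c m).conf e e') → (c n).conf e e' := by
    rintro n e e' he he' ⟨m, hm⟩
    have := (mono m (max m n) (le_max_left m n)).2.1 _ _ hm
    exact (mono n (max m n) (le_max_right m n)).2.2.2.2.1 e e' he he' this
  have enabdown : ∀ n X e, X ⊆ (c n).events → e ∈ (c n).events →
      (∃ m, (c m).enab X e) → (c n).enab X e := by
    rintro n X e hX he ⟨m, hm⟩
    have := (mono m (max m n) (le_max_left m n)).2.2.1 _ _ hm
    exact (mono n (max m n) (le_max_right m n)).2.2.2.2.2 X e hX he this
  have labdown : ∀ n e a, e ∈ (c n).events → (∃ m, (c m).lab e a) → (c n).lab e a := by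
    rintro n e a he ⟨m, hm⟩
    have hem : e ∈ (c m).events := (hES m).lab_dom e a hm
    have := ((mono m (max m n) (le_max_left m n)).2.2.2.1 e hem a).1 hm
    exact ((mono n (max m n) (le_max_right m n)).2.2.2.1 e he a).2 this
  have hle : ∀ n, leES (c n) (unionES c) := by
    intro n
    refine ⟨Set.subset_iUnion (fun k => (c k).events) n, fun e e' h => ⟨n, h⟩,
      fun X e h => ⟨n, h⟩, fun e he a => ⟨fun h => ⟨n, h⟩, fun h => labdown n e a he h⟩,
      fun e e' he he' h => confdown n e e' he he' h,
      fun X e hX he h => enabdown n X e hX he h⟩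
  refine ⟨?_, hle, ?_⟩
  · constructor
    · rintro e e' ⟨n, h⟩
      obtain ⟨he, he'⟩ := (hES n).conf_mem e e' h
      exact ⟨Set.mem_iUnion.2 ⟨n, he⟩, Set.mem_iUnion.2 ⟨n, he'⟩⟩
    · rintro e ⟨n, h⟩; exact (hES n).conf_irrefl e h
    · rintro e e' ⟨n, h⟩; exact ⟨n, (hES n).conf_symm e e' h⟩
    · rintro X e ⟨n, h⟩
      obtain ⟨hX, he, hfin, hcf⟩ := (hES n).enab_dom X e h
      refine ⟨hX.trans (Set.subset_iUnion (fun k => (c k).events) n),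
        Set.mem_iUnion.2 ⟨n, he⟩, hfin, ?_⟩
      intro x hx y hy hxy
      exact hcf x hx y hy (confdown n x y (hX hx) (hX hy) hxy)
    · rintro X Y e ⟨n, h⟩ hXY hYsub hYfin hYcf
      obtain ⟨N0, hN0⟩ := finite_subset_union hchain hYfin hYsub
      set N := max n N0 with hN
      have hYN : Y ⊆ (c N).events := hN0.trans (mono N0 N (le_max_right n N0)).1
      have hcfN : CF (c N).conf Y := fun x hx y hy hxy => hYcf x hx y hy ⟨N, hxy⟩
      have hEn : (c N).enab X e := (mono n N (le_max_left n N0)).2.2.1 X e h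
      exact ⟨N, (hES N).saturated X Y e hEn hXY hYN hYfin hcfN⟩
    · rintro e a ⟨n, h⟩; exact Set.mem_iUnion.2 ⟨n, (hES n).lab_dom e a h⟩
    · rintro e a b ⟨m, hm⟩ ⟨n, hn⟩
      have he : e ∈ (c m).events := (hES m).lab_dom e a hm
      have := labdown m e b he ⟨n, hn⟩
      exact (hES m).lab_fun e a b hm this
    · rintro e he
      obtain ⟨n, hn⟩ := Set.mem_iUnion.1 he
      obtain ⟨a, ha⟩ := (hES n).lab_total e hn
      exact ⟨a, n, ha⟩
  · intro U hU hleU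
    refine ⟨?_, ?_, ?_, ?_, ?_, ?_⟩
    · exact Set.iUnion_subset fun n => (hleU n).1
    · rintro e e' ⟨n, h⟩; exact (hleU n).2.1 e e' h
    · rintro X e ⟨n, h⟩; exact (hleU n).2.2.1 X e h
    · rintro e he a
      obtain ⟨n, hn⟩ := Set.mem_iUnion.1 he
      constructor
      · rintro ⟨m, hm⟩
        exact ((hleU m).2.2.2.1 e ((hES m).lab_dom e a hm) a).1 hm
      · intro h
        exact ⟨n, ((hleU n).2.2.2.1 e hn a).2 h⟩
    · rintro e e' he he' h
      obtain ⟨m, hm⟩ := Set.mem_iUnion.1 he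
      obtain ⟨n, hn⟩ := Set.mem_iUnion.1 he'
      set N := max m n
      have heN : e ∈ (c N).events := (mono m N (le_max_left m n)).1 hm
      have heN' : e' ∈ (c N).events := (mono n N (le_max_right m n)).1 hn
      exact ⟨N, (hleU N).2.2.2.2.1 e e' heN heN' h⟩
    · rintro X e hX he h
      obtain ⟨hXsub, heU, hfin, hcf⟩ := hU.enab_dom X e h
      obtain ⟨N0, hN0⟩ := finite_subset_union hchain hfin hX
      obtain ⟨n, hn⟩ := Set.mem_iUnion.1 he
      set N := max n N0
      have hXN : X ⊆ (c N).events := hN0.trans (mono N0 N (le_max_right n N0)).1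
      have heN : e ∈ (c N).events := (mono n N (le_max_left n N0)).1 hn
      exact ⟨N, (hleU N).2.2.2.2.2 X e hXN heN h⟩

end ESC
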